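/- Let K be a field and M a matrix over K with rows indexed by a finite set L and columns indexed by a finite set C, and suppose rank M = s. Let A ⊆ L and B ⊆ C be subsets of cardinality s such that the s × s submatrix D = (M_{a b})_{a ∈ A, b ∈ B} is invertible. Then every entry of M is determined by its A-rows and B-columns through D: for all i ∈ L and j ∈ C, M_{i j} = Σ_{a ∈ A, b ∈ B} M_{i b} (D^{−1})_{b a} M_{a j}. In particular, the generalized Schur complement M_{i j} − Σ_{a,b} M_{i b} (D^{−1})_{b a} M_{a j} vanishes identically. -/

import Mathlib

/-- If a matrix `M` over a field has rank `s` and `D` is an invertible `s × s`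
submatrix extracted from rows `A` and columns `B` (enumerated by bijections
`r : Fin s ≃ A`, `c : Fin s ≃ B`), then every entry of `M` is reconstructed
from its `A`-rows and `B`-columns:
`M i j = ∑_{a ∈ A, b ∈ B} M i b (D⁻¹) b a M a j`, i.e. the generalized Schur
complement vanishes identically. -/
theorem rank_submatrix_schur_complement
    (K : Type*) [Field K]
    (L C : Type*) [Fintype L] [Fintype C] [DecidableEq L] [DecidableEq C]
    (M : Matrix L C K) (s : ℕ) (hrank : M.rank = s)
    (A : Finset L) (B : Finset C) (hA : A.card = s) (hB : B.card = s)
    (r : Fin s ≃ ↥A) (c : Fin s ≃ ↥B)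
    (D : Matrix (Fin s) (Fin s) K) (hD : D = fun p q => M (r p).1 (c q).1)
    (hDinv : IsUnit D.det) :
    ∀ (i : L) (j : C),
      M i j = ∑ p : Fin s, ∑ q : Fin s,
        M i (c q).1 * D⁻¹ q p * M (r p).1 j := by
  have hDu : IsUnit D := (Matrix.isUnit_iff_isUnit_det D).2 hDinv
  -- rows of M indexed by A, as vectors in C → K
  set v : Fin s → (C → K) := fun p => M (r p).1 with hv
  -- they are linearly independent since D is invertible
  have hindep : LinearIndependent K v := by
    have hDrows : LinearIndependent K (fun p => D p) :=
      Matrix.linearIndependent_rows_iff_isUnit.2 hDu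
    have hcomp : LinearIndependent K
        ((LinearMap.funLeft K K (fun q : Fin s => (c q).1)) ∘ v) := by
      convert hDrows using 1
      funext p
      ext q
      simp [hD, v, LinearMap.funLeft]
    exact LinearIndependent.of_comp _ hcomp
  -- the span of these rows equals the full row space
  have hle : Submodule.span K (Set.range v) ≤ Submodule.span K (Set.range M) :=
    Submodule.span_mono (by rintro _ ⟨p, rfl⟩; exact ⟨(r p).1, rfl⟩)
  have hfr1 : Module.finrank K (Submodule.span K (Set.range v)) = s := by
    rw [finrank_span_eq_card hindep, Fintype.card_fin]
  have hfr2 : Module.finrank K (Submodule.span K (Set.range M)) = s := by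
    exact (Matrix.rank_eq_finrank_span_row M).symm.trans hrank
  have hspan : Submodule.span K (Set.range v) = Submodule.span K (Set.range M) := by
    apply Submodule.eq_of_le_of_finrank_le hle
    rw [hfr1, hfr2]
  intro i j
  have hmem : M i ∈ Submodule.span K (Set.range v) := by
    rw [hspan]
    exact Submodule.subset_span ⟨i, rfl⟩
  obtain ⟨lam, hlam⟩ := (Submodule.mem_span_range_iff_exists_fun K).1 hmem
  -- restricting to B columns: lam ᵥ* D = (fun q => M i (c q))
  have hvm : D.vecMul lam = fun q => M i (c q).1 := by
    funext q
    have := congrFun hlam (c q).1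
    simpa [Matrix.vecMul, dotProduct, hD, v] using this
  have hlameq : lam = D⁻¹.vecMul (fun q => M i (c q).1) := by
    rw [← hvm, Matrix.vecMul_vecMul, Matrix.mul_nonsing_inv D hDinv, Matrix.vecMul_one]
  have hMij : M i j = ∑ p, lam p * M (r p).1 j := by
    have := congrFun hlam j
    simp only [Finset.sum_apply, Pi.smul_apply, smul_eq_mul, v] at this
    exact this.symm
  rw [hMij, hlameq]
  refine Finset.sum_congr rfl fun p _ => ?_
  rw [Matrix.vecMul, dotProduct, Finset.sum_mul]
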